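/- Let A be a complex unital Banach algebra, let N ≥ 1, and let X_1, …, X_N ∈ A. Let σ_{3,1} = 1/2 + i·√3/6, σ_{3,2} = 1/2 − i·√3/6, γ = 1/2 + i/2, η = 1/2 − i/2, and let a_1 = σ_{3,1}γ, a_2 = σ_{3,1}η, a_3 = σ_{3,2}γ, a_4 = σ_{3,2}η. Define the CLT3 product P(t) := ∏_{k=1}^{4} ( exp(a_k t X_1)·exp(a_k t X_2) ⋯ exp(a_k t X_N) ), with factors multiplied left to right in increasing k. Then, as real t → 0, ‖P(t) − exp(t·(X_1 + ⋯ + X_N))‖ = O(|t|⁴); that is, the CLT3 method is third-order accurate for every N. -/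

import Mathlib

open scoped BigOperators

section CLT3Aux

set_option linter.unusedSectionVars false

variable {A : Type*} [NormedRing A] [NormedAlgebra ℂ A] [CompleteSpace A]

open Asymptotics Filter NormedSpace

/-- Order-4 jet of a function `ℂ → A` at `0`. -/
def CLT3Jet (f : ℂ → A) (b₀ b₁ b₂ b₃ : A) : Prop :=
  (fun z : ℂ => f z - (b₀ + z • b₁ + z ^ 2 • b₂ + z ^ 3 • b₃)) =O[nhds 0] (fun z : ℂ => ‖z‖ ^ 4)

lemma CLT3_pow_smul_isBigO {k : ℕ} (hk : 4 ≤ k) (c : A) :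
    (fun z : ℂ => z ^ k • c) =O[nhds 0] (fun z : ℂ => ‖z‖ ^ 4) := by
  rw [Asymptotics.isBigO_iff]
  refine ⟨‖c‖, ?_⟩
  have h1 : ∀ᶠ z : ℂ in nhds 0, ‖z‖ ≤ 1 := by
    filter_upwards [Metric.closedBall_mem_nhds (0 : ℂ) one_pos] with z hz
    simpa using hz
  filter_upwards [h1] with z hz
  rw [norm_smul, norm_pow, Real.norm_eq_abs, abs_of_nonneg (by positivity)]
  calc ‖z‖ ^ k * ‖c‖ ≤ ‖z‖ ^ 4 * ‖c‖ :=
        mul_le_mul_of_nonneg_right (pow_le_pow_of_le_one (norm_nonneg z) hz hk) (norm_nonneg c)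
    _ = ‖c‖ * ‖z‖ ^ 4 := by ring

lemma CLT3Jet.isBigO_one {f : ℂ → A} {b₀ b₁ b₂ b₃ : A} (h : CLT3Jet f b₀ b₁ b₂ b₃) :
    f =O[nhds 0] (fun _ : ℂ => (1 : ℝ)) := by
  have h2 : (fun z : ℂ => b₀ + z • b₁ + z ^ 2 • b₂ + z ^ 3 • b₃) =O[nhds (0:ℂ)]
      (fun _ : ℂ => (1 : ℝ)) := by
    apply Filter.Tendsto.isBigO_one (F := ℝ)
    exact (by continuity :
      Continuous fun z : ℂ => b₀ + z • b₁ + z ^ 2 • b₂ + z ^ 3 • b₃).tendsto 0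
  have h3 : (fun z : ℂ => ‖z‖ ^ 4) =O[nhds (0:ℂ)] (fun _ : ℂ => (1 : ℝ)) := by
    apply Filter.Tendsto.isBigO_one (F := ℝ) (c := (0:ℝ))
    have : Continuous fun z : ℂ => ‖z‖ ^ 4 := by continuity
    simpa using this.tendsto 0
  have := (h.trans h3).add h2
  simpa using this

lemma CLT3Jet.mul {f g : ℂ → A} {b₀ b₁ b₂ b₃ c₀ c₁ c₂ c₃ : A}
    (hf : CLT3Jet f b₀ b₁ b₂ b₃) (hg : CLT3Jet g c₀ c₁ c₂ c₃) :
    CLT3Jet (fun z => f z * g z) (b₀ * c₀) (b₀ * c₁ + b₁ * c₀)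
      (b₀ * c₂ + b₁ * c₁ + b₂ * c₀) (b₀ * c₃ + b₁ * c₂ + b₂ * c₁ + b₃ * c₀) := by
  have hgO : g =O[nhds 0] (fun _ : ℂ => (1 : ℝ)) := hg.isBigO_one
  have hPfO : (fun z : ℂ => b₀ + z • b₁ + z ^ 2 • b₂ + z ^ 3 • b₃) =O[nhds (0:ℂ)]
      (fun _ : ℂ => (1 : ℝ)) := by
    apply Filter.Tendsto.isBigO_one (F := ℝ)
    exact (by continuity :
      Continuous fun z : ℂ => b₀ + z • b₁ + z ^ 2 • b₂ + z ^ 3 • b₃).tendsto 0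
  have t1 : (fun z : ℂ => (f z - (b₀ + z • b₁ + z ^ 2 • b₂ + z ^ 3 • b₃)) * g z)
      =O[nhds 0] (fun z : ℂ => ‖z‖ ^ 4) := by
    simpa using Asymptotics.IsBigO.mul hf hgO
  have t2 : (fun z : ℂ => (b₀ + z • b₁ + z ^ 2 • b₂ + z ^ 3 • b₃) *
      (g z - (c₀ + z • c₁ + z ^ 2 • c₂ + z ^ 3 • c₃))) =O[nhds 0] (fun z : ℂ => ‖z‖ ^ 4) := by
    simpa using Asymptotics.IsBigO.mul hPfO hg
  have t3 : (fun z : ℂ => z ^ 4 • (b₁ * c₃ + b₂ * c₂ + b₃ * c₁)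
      + (z ^ 5 • (b₂ * c₃ + b₃ * c₂) + z ^ 6 • (b₃ * c₃)))
      =O[nhds 0] (fun z : ℂ => ‖z‖ ^ 4) :=
    (CLT3_pow_smul_isBigO (by norm_num) _).add
      ((CLT3_pow_smul_isBigO (by norm_num) _).add (CLT3_pow_smul_isBigO (by norm_num) _))
  have key := (t1.add t2).add t3
  unfold CLT3Jet
  refine key.congr_left fun z => ?_
  simp only [sub_mul, mul_sub, add_mul, mul_add, smul_mul_assoc, mul_smul_comm, smul_smul,
    smul_add, smul_sub]
  module

lemma CLT3Jet.comp_mul {f : ℂ → A} {b₀ b₁ b₂ b₃ : A} (α : ℂ) (h : CLT3Jet f b₀ b₁ b₂ b₃) :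
    CLT3Jet (fun z => f (α * z)) b₀ (α • b₁) (α ^ 2 • b₂) (α ^ 3 • b₃) := by
  have ht : Filter.Tendsto (fun z : ℂ => α * z) (nhds 0) (nhds 0) := by
    simpa using (continuous_mul_left α).tendsto (0 : ℂ)
  have h2 := h.comp_tendsto ht
  have h3 : (fun z : ℂ => ‖α * z‖ ^ 4) =O[nhds (0:ℂ)] (fun z : ℂ => ‖z‖ ^ 4) := by
    simp only [norm_mul, mul_pow]
    exact (isBigO_refl (fun z : ℂ => ‖z‖ ^ 4) _).const_mul_left _
  have h4 := h2.trans h3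
  unfold CLT3Jet
  refine h4.congr_left fun z => ?_
  show f (α * z) - _ = f (α * z) - _
  simp only [smul_smul, mul_pow]
  module

lemma CLT3Jet.congr_coeffs {f : ℂ → A} {b₀ b₁ b₂ b₃ c₀ c₁ c₂ c₃ : A}
    (h : CLT3Jet f b₀ b₁ b₂ b₃) (h0 : b₀ = c₀) (h1 : b₁ = c₁) (h2 : b₂ = c₂) (h3 : b₃ = c₃) :
    CLT3Jet f c₀ c₁ c₂ c₃ := by subst h0 h1 h2 h3; exact h

lemma CLT3Jet.sub_isBigO {f g : ℂ → A} {b₀ b₁ b₂ b₃ : A}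
    (hf : CLT3Jet f b₀ b₁ b₂ b₃) (hg : CLT3Jet g b₀ b₁ b₂ b₃) :
    (fun z : ℂ => f z - g z) =O[nhds 0] (fun z : ℂ => ‖z‖ ^ 4) := by
  have := hf.sub hg
  refine this.congr_left fun z => ?_
  abel

lemma CLT3_coeff_eq_smul_iteratedDeriv {f : ℂ → A} {p : FormalMultilinearSeries ℂ ℂ A}
    (h : HasFPowerSeriesAt f p 0) (n : ℕ) :
    p.coeff n = ((n.factorial : ℂ))⁻¹ • iteratedDeriv n f 0 := by
  obtain ⟨r, hr⟩ := h
  have h2 := hr.factorial_smul (1 : ℂ) n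
  rw [iteratedDeriv_eq_iteratedFDeriv, ← h2, ← Nat.cast_smul_eq_nsmul ℂ,
    inv_smul_smul₀ (by exact_mod_cast n.factorial_ne_zero)]
  rfl

lemma CLT3_HasFPowerSeriesAt.clt3Jet {f : ℂ → A} {p : FormalMultilinearSeries ℂ ℂ A}
    (h : HasFPowerSeriesAt f p 0) :
    CLT3Jet f (p.coeff 0) (p.coeff 1) (p.coeff 2) (p.coeff 3) := by
  have h2 := h.isBigO_sub_partialSum_pow 4
  simp only [zero_add] at h2
  unfold CLT3Jet
  refine h2.congr_left fun z => ?_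
  congr 1
  simp [FormalMultilinearSeries.partialSum, Finset.sum_range_succ,
    FormalMultilinearSeries.apply_eq_pow_smul_coeff]

lemma CLT3_analyticAt_exp_smul (Y : A) (z : ℂ) :
    AnalyticAt ℂ (fun w : ℂ => exp (w • Y)) z := by
  have h1 : AnalyticAt ℂ (exp : A → A) (z • Y) :=
    analyticAt_exp_of_mem_ball _ (by simp [expSeries_radius_eq_top])
  have h2 : AnalyticAt ℂ (fun w : ℂ => w • Y) z :=
    (ContinuousLinearMap.smulRight (ContinuousLinearMap.id ℂ ℂ) Y).analyticAt z
  exact AnalyticAt.comp (f := fun w : ℂ => w • Y) (g := exp) h1 h2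

lemma CLT3_exp_coeffs (S : A) {p : FormalMultilinearSeries ℂ ℂ A}
    (hp : HasFPowerSeriesAt (fun z : ℂ => exp (z • S)) p 0) :
    p.coeff 0 = 1 ∧ p.coeff 1 = S ∧ p.coeff 2 = (2:ℂ)⁻¹ • (S * S) ∧
      p.coeff 3 = (6:ℂ)⁻¹ • (S * (S * S)) := by
  have hd1 : deriv (fun z : ℂ => exp (z • S)) = fun z : ℂ => S * exp (z • S) :=
    funext fun z => (hasDerivAt_exp_smul_const' S z).deriv
  have hd2 : deriv (fun z : ℂ => S * exp (z • S)) = fun z : ℂ => S * (S * exp (z • S)) :=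
    funext fun z => ((hasDerivAt_exp_smul_const' S z).const_mul S).deriv
  have hd3 : deriv (fun z : ℂ => S * (S * exp (z • S)))
      = fun z : ℂ => S * (S * (S * exp (z • S))) :=
    funext fun z => (((hasDerivAt_exp_smul_const' S z).const_mul S).const_mul S).deriv
  refine ⟨?_, ?_, ?_, ?_⟩
  · rw [CLT3_coeff_eq_smul_iteratedDeriv hp]
    simp [exp_zero]
  · rw [CLT3_coeff_eq_smul_iteratedDeriv hp]
    simp [iteratedDeriv_one, hd1, exp_zero]
  · rw [CLT3_coeff_eq_smul_iteratedDeriv hp, show (2:ℕ) = 1 + 1 from rfl,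
      iteratedDeriv_succ', hd1]
    simp [iteratedDeriv_one, hd2, exp_zero, Nat.factorial]
  · rw [CLT3_coeff_eq_smul_iteratedDeriv hp, show (3:ℕ) = 2 + 1 from rfl, iteratedDeriv_succ',
      hd1, show (2:ℕ) = 1 + 1 from rfl, iteratedDeriv_succ', hd2]
    simp [iteratedDeriv_one, hd3, exp_zero, Nat.factorial]

lemma CLT3_listProd_exp_zero (X : ℕ → A) (n : ℕ) :
    ((List.range n).map fun ℓ => exp ((0:ℂ) • X (ℓ + 1))).prod = 1 := by
  rw [List.prod_eq_one]
  intro x hx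
  simp only [List.mem_map] at hx
  obtain ⟨ℓ, -, rfl⟩ := hx
  simp [exp_zero]

lemma CLT3_listProd_exp_analyticAt (X : ℕ → A) (n : ℕ) :
    AnalyticAt ℂ (fun z : ℂ => ((List.range n).map fun ℓ => exp (z • X (ℓ + 1))).prod) 0 := by
  induction n with
  | zero => simpa using analyticAt_const
  | succ n ih =>
    have heq : (fun z : ℂ => ((List.range (n+1)).map fun ℓ => exp (z • X (ℓ + 1))).prod)
        = fun z : ℂ => ((List.range n).map fun ℓ => exp (z • X (ℓ + 1))).prod
            * exp (z • X (n + 1)) := by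
      funext z
      rw [List.range_succ]
      simp
    rw [heq]
    exact ih.mul (CLT3_analyticAt_exp_smul _ 0)

lemma CLT3_listProd_exp_hasDerivAt (X : ℕ → A) (n : ℕ) :
    HasDerivAt (fun z : ℂ => ((List.range n).map fun ℓ => exp (z • X (ℓ + 1))).prod)
      (∑ i ∈ Finset.range n, X (i + 1)) 0 := by
  induction n with
  | zero => simpa using hasDerivAt_const (0:ℂ) (1:A)
  | succ n ih =>
    have heq : (fun z : ℂ => ((List.range (n+1)).map fun ℓ => exp (z • X (ℓ + 1))).prod)
        = fun z : ℂ => ((List.range n).map fun ℓ => exp (z • X (ℓ + 1))).prod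
            * exp (z • X (n + 1)) := by
      funext z
      rw [List.range_succ]
      simp
    rw [heq]
    have h2 := ih.mul (hasDerivAt_exp_smul_const (X (n + 1)) (0:ℂ))
    simp only [CLT3_listProd_exp_zero, zero_smul, exp_zero, mul_one, one_mul] at h2
    simpa [Finset.sum_range_succ, Pi.mul_def] using h2

lemma CLT3_sum_Icc_one_eq_sum_range (X : ℕ → A) (n : ℕ) :
    ∑ ℓ ∈ Finset.Icc 1 n, X ℓ = ∑ i ∈ Finset.range n, X (i + 1) := by
  induction n with
  | zero => simp
  | succ n ih =>
    rw [Finset.sum_Icc_succ_top (by omega), ih, Finset.sum_range_succ]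

end CLT3Aux

/-- **The CLT3 method is third-order accurate for every `N`.**  With stage
coefficients `a₁ = σ_{3,1}γ`, `a₂ = σ_{3,1}η`, `a₃ = σ_{3,2}γ`, `a₄ = σ_{3,2}η`
(where `σ_{3,1} = 1/2 + i√3/6`, `σ_{3,2} = 1/2 − i√3/6`, `γ = 1/2 + i/2`,
`η = 1/2 − i/2`) and
`P(t) = ∏_{k=1}^{4} (exp(a_k t X₁)⋯exp(a_k t X_N))`, as real `t → 0`,
`‖P(t) − exp(t(X₁ + ⋯ + X_N))‖ = O(|t|⁴)`. -/
theorem CLT3_third_order {A : Type*} [NormedRing A] [NormedAlgebra ℂ A]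
    [CompleteSpace A] (N : ℕ) (hN : 1 ≤ N) (X : ℕ → A) (a : ℕ → ℂ)
    (ha₁ : a 1 = (1 / 2 + Complex.I * ((Real.sqrt 3 : ℝ) : ℂ) / 6) *
      (1 / 2 + Complex.I / 2))
    (ha₂ : a 2 = (1 / 2 + Complex.I * ((Real.sqrt 3 : ℝ) : ℂ) / 6) *
      (1 / 2 - Complex.I / 2))
    (ha₃ : a 3 = (1 / 2 - Complex.I * ((Real.sqrt 3 : ℝ) : ℂ) / 6) *
      (1 / 2 + Complex.I / 2))
    (ha₄ : a 4 = (1 / 2 - Complex.I * ((Real.sqrt 3 : ℝ) : ℂ) / 6) *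
      (1 / 2 - Complex.I / 2)) :
    (fun t : ℝ =>
        ((List.range 4).map (fun k =>
            ((List.range N).map (fun ℓ =>
                NormedSpace.exp ((a (k + 1) * (t : ℂ)) • X (ℓ + 1)))).prod)).prod -
          NormedSpace.exp ((t : ℂ) • ∑ ℓ ∈ Finset.Icc 1 N, X ℓ))
      =O[nhds (0 : ℝ)] fun t : ℝ => |t| ^ 4 := by
  classical
  set s3 : ℂ := ((Real.sqrt 3 : ℝ) : ℂ) with hs3def
  have hs3 : s3 ^ 2 = 3 := by
    rw [hs3def, ← Complex.ofReal_pow, Real.sq_sqrt (by norm_num : (0:ℝ) ≤ 3)]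
    norm_num
  set S : A := ∑ i ∈ Finset.range N, X (i + 1) with hSdef
  set L : ℂ → A := fun z : ℂ => ((List.range N).map fun ℓ =>
    NormedSpace.exp (z • X (ℓ + 1))).prod with hLdef
  -- jet of L
  obtain ⟨pL, hpL⟩ := CLT3_listProd_exp_analyticAt X N
  have cL0 : pL.coeff 0 = 1 := by
    rw [CLT3_coeff_eq_smul_iteratedDeriv hpL]
    simp [CLT3_listProd_exp_zero]
  have cL1 : pL.coeff 1 = S := by
    rw [CLT3_coeff_eq_smul_iteratedDeriv hpL]
    simp only [iteratedDeriv_one, Nat.factorial_one, Nat.cast_one, inv_one, one_smul]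
    exact (CLT3_listProd_exp_hasDerivAt X N).deriv
  have jetL : CLT3Jet L 1 S (pL.coeff 2) (pL.coeff 3) := by
    have := CLT3_HasFPowerSeriesAt.clt3Jet hpL
    rwa [cL0, cL1] at this
  set l2 : A := pL.coeff 2
  set l3 : A := pL.coeff 3
  -- jet of exp (z • S)
  obtain ⟨pE, hpE⟩ := CLT3_analyticAt_exp_smul S (0:ℂ)
  obtain ⟨e0, e1, e2, e3⟩ := CLT3_exp_coeffs S hpE
  have jetE : CLT3Jet (fun z : ℂ => NormedSpace.exp (z • S)) 1 S
      ((2:ℂ)⁻¹ • (S * S)) ((6:ℂ)⁻¹ • (S * (S * S))) := by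
    have := CLT3_HasFPowerSeriesAt.clt3Jet hpE
    rwa [e0, e1, e2, e3] at this
  -- jets of the stages and their product
  have j1 := jetL.comp_mul (a 1)
  have j2 := jetL.comp_mul (a 2)
  have j3 := jetL.comp_mul (a 3)
  have j4 := jetL.comp_mul (a 4)
  have jetP := j1.mul (j2.mul (j3.mul j4))
  have jetP' : CLT3Jet (fun z : ℂ => L (a 1 * z) * (L (a 2 * z) * (L (a 3 * z) * L (a 4 * z))))
      1 S ((2:ℂ)⁻¹ • (S * S)) ((6:ℂ)⁻¹ • (S * (S * S))) := by
    refine jetP.congr_coeffs ?_ ?_ ?_ ?_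
    · simp
    · simp only [mul_add, add_mul, one_mul, mul_one, smul_mul_assoc, mul_smul_comm, smul_smul, smul_add]
      match_scalars <;>
      (rw [ha₁, ha₂, ha₃, ha₄]; first
        | linear_combination (0:ℂ) * hs3 + (0:ℂ) * Complex.I_sq
        | linear_combination (0:ℂ) * hs3 + ((-1/8) + (-1/72)*s3^2*Complex.I^2) * Complex.I_sq
        | linear_combination ((1/72)) * hs3 + ((-1/16) + (-1/72)*s3^2 + (1/144)*s3^2*Complex.I^2) * Complex.I_sq
        | linear_combination ((-1/48) + (-1/48)*Complex.I) * hs3 + ((1/32) + (-1/32)*Complex.I + (1/48)*s3*Complex.I + (1/48)*s3^2 + (1/48)*s3^2*Complex.I + (-5/288)*s3^2*Complex.I^2 + (-1/96)*s3^2*Complex.I^3 + (-1/432)*s3^3*Complex.I^3) * Complex.I_sq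
        | linear_combination (0:ℂ) * hs3 + ((1/4) + (1/36)*s3^2*Complex.I^2) * Complex.I_sq
        | linear_combination ((-1/48) + (1/48)*Complex.I) * hs3 + ((1/32) + (1/32)*Complex.I + (-1/48)*s3*Complex.I + (1/48)*s3^2 + (-1/48)*s3^2*Complex.I + (-5/288)*s3^2*Complex.I^2 + (1/96)*s3^2*Complex.I^3 + (1/432)*s3^3*Complex.I^3) * Complex.I_sq
        | linear_combination ((1/24)) * hs3 + ((3/16) + (-1/24)*s3^2 + (1/16)*s3^2*Complex.I^2) * Complex.I_sq)
    · simp only [mul_add, add_mul, one_mul, mul_one, smul_mul_assoc, mul_smul_comm, smul_smul, smul_add]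
      match_scalars <;>
      (rw [ha₁, ha₂, ha₃, ha₄]; first
        | linear_combination (0:ℂ) * hs3 + (0:ℂ) * Complex.I_sq
        | linear_combination (0:ℂ) * hs3 + ((-1/8) + (-1/72)*s3^2*Complex.I^2) * Complex.I_sq
        | linear_combination ((1/72)) * hs3 + ((-1/16) + (-1/72)*s3^2 + (1/144)*s3^2*Complex.I^2) * Complex.I_sq
        | linear_combination ((-1/48) + (-1/48)*Complex.I) * hs3 + ((1/32) + (-1/32)*Complex.I + (1/48)*s3*Complex.I + (1/48)*s3^2 + (1/48)*s3^2*Complex.I + (-5/288)*s3^2*Complex.I^2 + (-1/96)*s3^2*Complex.I^3 + (-1/432)*s3^3*Complex.I^3) * Complex.I_sq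
        | linear_combination (0:ℂ) * hs3 + ((1/4) + (1/36)*s3^2*Complex.I^2) * Complex.I_sq
        | linear_combination ((-1/48) + (1/48)*Complex.I) * hs3 + ((1/32) + (1/32)*Complex.I + (-1/48)*s3*Complex.I + (1/48)*s3^2 + (-1/48)*s3^2*Complex.I + (-5/288)*s3^2*Complex.I^2 + (1/96)*s3^2*Complex.I^3 + (1/432)*s3^3*Complex.I^3) * Complex.I_sq
        | linear_combination ((1/24)) * hs3 + ((3/16) + (-1/24)*s3^2 + (1/16)*s3^2*Complex.I^2) * Complex.I_sq)
    · simp only [mul_add, add_mul, one_mul, mul_one, smul_mul_assoc, mul_smul_comm, smul_smul, smul_add]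
      match_scalars <;>
      (rw [ha₁, ha₂, ha₃, ha₄]; first
        | linear_combination (0:ℂ) * hs3 + (0:ℂ) * Complex.I_sq
        | linear_combination (0:ℂ) * hs3 + ((-1/8) + (-1/72)*s3^2*Complex.I^2) * Complex.I_sq
        | linear_combination ((1/72)) * hs3 + ((-1/16) + (-1/72)*s3^2 + (1/144)*s3^2*Complex.I^2) * Complex.I_sq
        | linear_combination ((-1/48) + (-1/48)*Complex.I) * hs3 + ((1/32) + (-1/32)*Complex.I + (1/48)*s3*Complex.I + (1/48)*s3^2 + (1/48)*s3^2*Complex.I + (-5/288)*s3^2*Complex.I^2 + (-1/96)*s3^2*Complex.I^3 + (-1/432)*s3^3*Complex.I^3) * Complex.I_sq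
        | linear_combination (0:ℂ) * hs3 + ((1/4) + (1/36)*s3^2*Complex.I^2) * Complex.I_sq
        | linear_combination ((-1/48) + (1/48)*Complex.I) * hs3 + ((1/32) + (1/32)*Complex.I + (-1/48)*s3*Complex.I + (1/48)*s3^2 + (-1/48)*s3^2*Complex.I + (-5/288)*s3^2*Complex.I^2 + (1/96)*s3^2*Complex.I^3 + (1/432)*s3^3*Complex.I^3) * Complex.I_sq
        | linear_combination ((1/24)) * hs3 + ((3/16) + (-1/24)*s3^2 + (1/16)*s3^2*Complex.I^2) * Complex.I_sq)
  have main := jetP'.sub_isBigO jetE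
  -- transfer to the real line
  have hof : Filter.Tendsto (fun t : ℝ => (t : ℂ)) (nhds 0) (nhds (0:ℂ)) := by
    simpa using Complex.continuous_ofReal.tendsto 0
  have hcomp := main.comp_tendsto hof
  rw [CLT3_sum_Icc_one_eq_sum_range X N]
  refine hcomp.congr (fun t => ?_) (fun t => ?_)
  · show L (a 1 * ↑t) * (L (a 2 * ↑t) * (L (a 3 * ↑t) * L (a 4 * ↑t)))
        - NormedSpace.exp ((t:ℂ) • S) = _
    rw [hSdef]
    congr 1
    simp [List.range_succ, mul_assoc, hLdef]
  · simp [Complex.norm_real]
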